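/- Let s be a positive integer, let K be a complex Hadamard matrix of order s+1 that is normalized (all entries of its first row equal 1), and let T be the s×(s+1) matrix consisting of the s noninitial rows of K. Let X, Y be s×s matrices and D an (s+1)×(s+1) matrix with unimodular entries such that the Petrescu array H = [[X, Y, T], [Y, X, T], [T*, T*, D]] is a complex Hadamard matrix of order 3s+1. Then (X − Y)(X − Y)* = (3s+1) I_s; that is, the difference X − Y is (a scalar multiple of) a unitary matrix. -/

import Mathlib

open Matrix

/-- Petrescu's array: the `(3s+1) × (3s+1)` block matrix
`[[X, Y, T], [Y, X, T], [Tᴴ, Tᴴ, D]]`. -/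
def petrescuArray {s : ℕ} (X Y : Matrix (Fin s) (Fin s) ℂ)
    (T : Matrix (Fin s) (Fin (s + 1)) ℂ) (D : Matrix (Fin (s + 1)) (Fin (s + 1)) ℂ) :
    Matrix ((Fin s ⊕ Fin s) ⊕ Fin (s + 1)) ((Fin s ⊕ Fin s) ⊕ Fin (s + 1)) ℂ :=
  Matrix.fromBlocks (Matrix.fromBlocks X Y Y X) (Matrix.fromRows T T)
    (Matrix.fromCols Tᴴ Tᴴ) D

/-- If Petrescu's array built from the noninitial rows `T` of a normalized complex
Hadamard matrix of order `s+1` and unimodular `X, Y, D` is a complex Hadamard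
matrix of order `3s+1`, then `(X - Y)(X - Y)ᴴ = (3s+1) I`, i.e. `X - Y` is a
scalar multiple of a unitary matrix. -/
theorem petrescu_X_sub_Y (s : ℕ) (hs : 0 < s)
    (K : Matrix (Fin (s + 1)) (Fin (s + 1)) ℂ)
    (hKuni : ∀ i j, ‖K i j‖ = 1)
    (hKhad : K * Kᴴ = ((s + 1 : ℕ) : ℂ) • 1)
    (hKnorm : ∀ j, K 0 j = 1)
    (T : Matrix (Fin s) (Fin (s + 1)) ℂ)
    (hT : ∀ (i : Fin s) (j : Fin (s + 1)), T i j = K i.succ j)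
    (X Y : Matrix (Fin s) (Fin s) ℂ)
    (D : Matrix (Fin (s + 1)) (Fin (s + 1)) ℂ)
    (hX : ∀ i j, ‖X i j‖ = 1)
    (hY : ∀ i j, ‖Y i j‖ = 1)
    (hD : ∀ i j, ‖D i j‖ = 1)
    (hHuni : ∀ i j, ‖petrescuArray X Y T D i j‖ = 1)
    (hHhad : petrescuArray X Y T D * (petrescuArray X Y T D)ᴴ =
      ((3 * s + 1 : ℕ) : ℂ) • 1) :
    (X - Y) * (X - Y)ᴴ = ((3 * s + 1 : ℕ) : ℂ) • 1 := by
  have key : (fromBlocks X Y Y X) * (fromBlocks X Y Y X)ᴴ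
      + fromRows T T * (fromRows T T)ᴴ = ((3 * s + 1 : ℕ) : ℂ) • 1 := by
    have h := congrArg Matrix.toBlocks₁₁ hHhad
    simpa [petrescuArray, fromBlocks_conjTranspose, fromBlocks_multiply,
      conjTranspose_fromRows_eq_fromCols_conjTranspose,
      conjTranspose_fromCols_eq_fromRows_conjTranspose,
      fromCols_mul_fromRows, Matrix.smul_one_eq_diagonal,
      toBlocks₁₁_diagonal] using h
  rw [fromBlocks_conjTranspose, fromBlocks_multiply,
    conjTranspose_fromRows_eq_fromCols_conjTranspose,
    fromRows_mul_fromCols] at key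
  have key' : fromBlocks (X * Xᴴ + Y * Yᴴ + T * Tᴴ) (X * Yᴴ + Y * Xᴴ + T * Tᴴ)
      (Y * Xᴴ + X * Yᴴ + T * Tᴴ) (Y * Yᴴ + X * Xᴴ + T * Tᴴ)
      = ((3 * s + 1 : ℕ) : ℂ) • 1 := by
    rw [← key, ← fromBlocks_add]
  have E1 : X * Xᴴ + Y * Yᴴ + T * Tᴴ = ((3 * s + 1 : ℕ) : ℂ) • 1 := by
    have h := congrArg Matrix.toBlocks₁₁ key'
    simpa [Matrix.smul_one_eq_diagonal, toBlocks₁₁_diagonal] using h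
  have E2 : X * Yᴴ + Y * Xᴴ + T * Tᴴ = 0 := by
    have h := congrArg Matrix.toBlocks₁₂ key'
    simpa [Matrix.smul_one_eq_diagonal] using h
  have expand : (X - Y) * (X - Y)ᴴ
      = (X * Xᴴ + Y * Yᴴ + T * Tᴴ) - (X * Yᴴ + Y * Xᴴ + T * Tᴴ) := by
    rw [conjTranspose_sub]; noncomm_ring
  rw [expand, E1, E2, sub_zero]
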